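/- Let I ⊆ F_q[x₁,…,x_n] be a zero-dimensional ideal admitting an irredundant primary decomposition I = I₁ ∩ I₂ ∩ ⋯ ∩ I_t into pairwise comaximal primary ideals I₁, …, I_t. Then the kernel of the F_q-linear map Ψ_I on F_q[x₁,…,x_n]/I is a t-dimensional F_q-vector space; that is, dim_{F_q} Ker(Ψ_I) = t, so Ker(Ψ_I) ≅ F_q^t as F_q-vector spaces. -/

import Mathlib

open Polynomial

/-- In the quotient of a commutative `Fq`-algebra by a primary ideal, any solution of
`x ^ q = x` comes from `Fq`. -/
lemma exists_algebraMap_of_pow_card_eq {Fq : Type*} [Field Fq] [Fintype Fq]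
    {P : Type*} [CommRing P] [Algebra Fq P]
    (J : Ideal P) (hJ : J.IsPrimary) (x : P ⧸ J) (hx : x ^ Fintype.card Fq = x) :
    ∃ c : Fq, algebraMap Fq (P ⧸ J) c = x := by
  classical
  have hq : 1 < Fintype.card Fq := Fintype.one_lt_card
  have hmonic : (X ^ Fintype.card Fq - X : Fq[X]).Monic := by
    apply monic_X_pow_sub
    rw [degree_X]
    exact_mod_cast hq
  have hid : ∏ a : Fq, (X - C a) = (X ^ Fintype.card Fq - X : Fq[X]) := by
    have h := prod_multiset_X_sub_C_of_monic_of_roots_card_eq hmonic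
      (by rw [FiniteField.roots_X_pow_card_sub_X,
          FiniteField.X_pow_card_sub_X_natDegree_eq Fq hq]
          simp [Finset.card_univ])
    rw [FiniteField.roots_X_pow_card_sub_X] at h
    rw [Finset.prod_eq_multiset_prod]
    exact h
  have hprod : ∏ a : Fq, (x - algebraMap Fq (P ⧸ J) a) = 0 := by
    have h := congrArg (aeval x) hid
    simpa [hx, sub_self] using h
  obtain ⟨f, rfl⟩ := Ideal.Quotient.mk_surjective x
  have hmem : (∏ a : Fq, (f - algebraMap Fq P a)) ∈ J := by
    rw [← Ideal.Quotient.eq_zero_iff_mem, map_prod]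
    simpa [map_sub, Ideal.Quotient.mk_algebraMap] using hprod
  have hpr : J.radical.IsPrime := Ideal.isPrime_radical hJ
  have hrad : ∃ a : Fq, f - algebraMap Fq P a ∈ J.radical := by
    haveI := hpr
    have h := Ideal.IsPrime.prod_mem_iff.mp (J.le_radical hmem)
    simpa using h
  obtain ⟨a, ha⟩ := hrad
  refine ⟨a, ?_⟩
  have hnil : IsNilpotent (Ideal.Quotient.mk J f - algebraMap Fq (P ⧸ J) a) := by
    obtain ⟨m, hm⟩ := ha
    refine ⟨m, ?_⟩
    have : (Ideal.Quotient.mk J) ((f - algebraMap Fq P a) ^ m) = 0 :=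
      Ideal.Quotient.eq_zero_iff_mem.mpr hm
    rw [map_pow, map_sub, Ideal.Quotient.mk_algebraMap] at this
    exact this
  have hunit : IsUnit (∏ b ∈ Finset.univ.erase a,
      (Ideal.Quotient.mk J f - algebraMap Fq (P ⧸ J) b)) := by
    refine Finset.prod_induction _ IsUnit (fun u v hu hv => hu.mul hv) isUnit_one ?_
    intro b hb
    have hba : a - b ≠ 0 := sub_ne_zero.mpr (Ne.symm (Finset.ne_of_mem_erase hb))
    have hu : IsUnit (algebraMap Fq (P ⧸ J) (a - b)) :=
      (isUnit_iff_ne_zero.mpr hba).map (algebraMap Fq (P ⧸ J))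
    have heq : Ideal.Quotient.mk J f - algebraMap Fq (P ⧸ J) b
        = algebraMap Fq (P ⧸ J) (a - b)
          + (Ideal.Quotient.mk J f - algebraMap Fq (P ⧸ J) a) := by
      rw [map_sub]; ring
    rw [heq]
    exact hnil.isUnit_add_left_of_commute hu (Commute.all _ _)
  have h0 : (Ideal.Quotient.mk J f - algebraMap Fq (P ⧸ J) a)
      * ∏ b ∈ Finset.univ.erase a,
        (Ideal.Quotient.mk J f - algebraMap Fq (P ⧸ J) b) = 0 :=
    (Finset.mul_prod_erase Finset.univ
      (fun b => Ideal.Quotient.mk J f - algebraMap Fq (P ⧸ J) b)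
      (Finset.mem_univ a)).trans hprod
  have := (hunit.mul_left_eq_zero).mp h0
  exact (sub_eq_zero.mp this).symm

theorem finrank_ker_psi_eq_number_of_primary_components
    {Fq : Type*} [Field Fq] [Fintype Fq] (n t : ℕ)
    (I : Fin t → Ideal (MvPolynomial (Fin n) Fq))
    (hprimary : ∀ i, (I i).IsPrimary)
    (hcomax : ∀ i j, i ≠ j → I i ⊔ I j = ⊤)
    (hirred : ∀ i, ¬ (⨅ j, ⨅ _ : j ≠ i, I j) ≤ I i)
    (hzerodim : FiniteDimensional Fq (MvPolynomial (Fin n) Fq ⧸ (⨅ i, I i)))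
    (K : Submodule Fq (MvPolynomial (Fin n) Fq ⧸ (⨅ i, I i)))
    (hK : ∀ f, f ∈ K ↔ f ^ Fintype.card Fq = f) :
    Module.finrank Fq K = t := by
  classical
  set P := MvPolynomial (Fin n) Fq with hP
  have hnontop : ∀ i, I i ≠ ⊤ := by
    intro i hi
    exact hirred i (hi ▸ le_top)
  haveI : ∀ i, Nontrivial (P ⧸ I i) := fun i => Ideal.Quotient.nontrivial_iff.mpr (hnontop i)
  have hcop : Pairwise (Function.onFun IsCoprime I) := fun i j hij =>
    Ideal.isCoprime_iff_sup_eq.mpr (hcomax i j hij)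
  let e : (P ⧸ ⨅ i, I i) ≃+* ∀ i, P ⧸ I i := Ideal.quotientInfRingEquivPiQuotient I hcop
  have he : ∀ f : P, e (Ideal.Quotient.mk _ f) = fun i => Ideal.Quotient.mk (I i) f :=
    fun f => rfl
  have hcomm : ∀ c : Fq, e (algebraMap Fq _ c) = algebraMap Fq (∀ i, P ⧸ I i) c := by
    intro c
    rw [show (algebraMap Fq (P ⧸ ⨅ i, I i) c) = Ideal.Quotient.mk _ (algebraMap Fq P c)
      from (Ideal.Quotient.mk_algebraMap Fq _ c).symm, he]
    funext i
    simp [Ideal.Quotient.mk_algebraMap]; rfl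
  let eA : (P ⧸ ⨅ i, I i) ≃ₐ[Fq] ∀ i, P ⧸ I i :=
    { e with commutes' := hcomm }
  let eL : (P ⧸ ⨅ i, I i) ≃ₗ[Fq] ∀ i, P ⧸ I i := eA.toLinearEquiv
  let Φ : (Fin t → Fq) →ₗ[Fq] ∀ i, P ⧸ I i :=
    LinearMap.pi fun i => (Algebra.linearMap Fq (P ⧸ I i)).comp (LinearMap.proj i)
  have hΦ : ∀ (v : Fin t → Fq) (i : Fin t), Φ v i = algebraMap Fq (P ⧸ I i) (v i) :=
    fun v i => rfl
  have hΦinj : Function.Injective Φ := by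
    intro v w h
    funext i
    have h' : algebraMap Fq (P ⧸ I i) (v i) = algebraMap Fq (P ⧸ I i) (w i) := by
      rw [← hΦ v i, ← hΦ w i, h]
    exact (algebraMap Fq (P ⧸ I i)).injective h'
  have hmap : K.map (eL : (P ⧸ ⨅ i, I i) →ₗ[Fq] ∀ i, P ⧸ I i) = LinearMap.range Φ := by
    ext x
    simp only [Submodule.mem_map, LinearMap.mem_range]
    constructor
    · rintro ⟨y, hy, rfl⟩
      have hy' : y ^ Fintype.card Fq = y := (hK y).mp hy
      have hx : ∀ i, (eL y i) ^ Fintype.card Fq = eL y i := by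
        intro i
        have h1 : (eA y) ^ Fintype.card Fq = eA (y ^ Fintype.card Fq) := (map_pow eA _ _).symm
        have h2 : eA (y ^ Fintype.card Fq) = eA y := congrArg eA hy'
        have h3 := congrFun (h1.trans h2) i
        exact h3
      choose c hc using fun i =>
        exists_algebraMap_of_pow_card_eq (I i) (hprimary i) (eL y i) (hx i)
      exact ⟨c, funext fun i => (hΦ c i).trans (hc i)⟩
    · rintro ⟨v, rfl⟩
      have hv : Φ v ^ Fintype.card Fq = Φ v := by
        funext i
        have : (Φ v i) ^ Fintype.card Fq = Φ v i := by
          rw [hΦ v i, ← map_pow, FiniteField.pow_card]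
        simpa using this
      refine ⟨eA.symm (Φ v), ?_, eA.apply_symm_apply (Φ v)⟩
      rw [hK]
      have : (eA.symm (Φ v)) ^ Fintype.card Fq = eA.symm (Φ v ^ Fintype.card Fq) :=
        (map_pow eA.symm _ _).symm
      rw [this, hv]
  have h1 : Module.finrank Fq K
      = Module.finrank Fq (K.map (eL : (P ⧸ ⨅ i, I i) →ₗ[Fq] ∀ i, P ⧸ I i)) :=
    (LinearEquiv.finrank_map_eq eL K).symm
  rw [h1, hmap, LinearMap.finrank_range_of_inj hΦinj]
  simp [Module.finrank_pi]
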